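/- Sub-critical remainder R₀ vanishes: under the assumptions of the sub-critical CLT ((F), (H2) with α ∈ (0,1/√2), and 𝔣 = (f_ℓ) satisfying (H2) uniformly), for any nondecreasing sequence (p_n) of positive integers with p_n < n, p_n/n → 1 and n − p_n − λ log n → ∞ for all λ > 0, the quantity R₀(n) = |𝔾_n|^{-1/2} ∑_{k=0}^{n-p_n-1} M_{𝔾_k}(f̃_{n-k}) satisfies lim_{n→∞} E[R₀(n)²] = 0. -/

import Mathlib

open MeasureTheory ProbabilityTheory Filter Finset
open scoped NNReal Topology

noncomputable section

namespace BMC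

variable {S : Type*} [MeasurableSpace S] {Ω : Type*} [MeasurableSpace Ω]

/-- The `n`-th generation `𝔾_n` of the binary tree, as a finset of `List Bool`. -/
def gen (n : ℕ) : Finset (List Bool) :=
  (Finset.univ : Finset (Fin n → Bool)).image List.ofFn

/-- The tree `𝕋_n` up to generation `n`. -/
def treeUpTo (n : ℕ) : Finset (List Bool) :=
  (Finset.range (n + 1)).biUnion gen

/-- The descendants `i𝔾_m` of `i` that are `m` generations below `i`. -/
def desc (i : List Bool) (m : ℕ) : Finset (List Bool) :=
  (gen m).image fun j => i ++ j

/-- `M_A(f) = ∑_{i ∈ A} f(X_i)`. -/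
def MA (X : List Bool → Ω → S) (A : Finset (List Bool)) (f : S → ℝ) (ω : Ω) : ℝ :=
  ∑ i ∈ A, f (X i ω)

/-- Complex-valued version of `M_A(f)`. -/
def MAC (X : List Bool → Ω → S) (A : Finset (List Bool)) (f : S → ℂ) (ω : Ω) : ℂ :=
  ∑ i ∈ A, f (X i ω)

/-- `𝒫(f ⊗ g)(x) = ∫ f(y) g(z) 𝒫(x, dy, dz)`. -/
def Ptens (P : Kernel S (S × S)) (f g : S → ℝ) (x : S) : ℝ :=
  ∫ p, f p.1 * g p.2 ∂(P x)

/-- `𝒫(f ⊗_sym g)(x) = ∫ (f(y) g(z) + g(y) f(z))/2 𝒫(x, dy, dz)`. -/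
def PtensSym (P : Kernel S (S × S)) (f g : S → ℝ) (x : S) : ℝ :=
  ∫ p, (f p.1 * g p.2 + g p.1 * f p.2) / 2 ∂(P x)

/-- Complex version of `𝒫(f ⊗_sym g)`. -/
def PtensSymC (P : Kernel S (S × S)) (f g : S → ℂ) (x : S) : ℂ :=
  ∫ p, (f p.1 * g p.2 + g p.1 * f p.2) / 2 ∂(P x)

/-- The operator `𝒬 f (x) = ∫ (f(y)+f(z))/2 𝒫(x, dy, dz)`, i.e. the action of the
Markov kernel `𝒬 = (P₀ + P₁)/2` on functions. -/
def Qop (P : Kernel S (S × S)) (f : S → ℝ) (x : S) : ℝ :=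
  ∫ p, (f p.1 + f p.2) / 2 ∂(P x)

/-- The iterated operator `𝒬ⁿ`. -/
def Qiter (P : Kernel S (S × S)) (n : ℕ) (f : S → ℝ) : S → ℝ := (Qop P)^[n] f

/-- Complex version of `𝒬`. -/
def QopC (P : Kernel S (S × S)) (f : S → ℂ) (x : S) : ℂ :=
  ∫ p, (f p.1 + f p.2) / 2 ∂(P x)

/-- Complex version of `𝒬ⁿ`. -/
def QiterC (P : Kernel S (S × S)) (n : ℕ) (f : S → ℂ) : S → ℂ := (QopC P)^[n] f

/-- `⟨μ, f⟩ = ∫ f dμ`. -/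
def mInt (μ : Measure S) (f : S → ℝ) : ℝ := ∫ x, f x ∂μ

/-- Complex `⟨μ, f⟩`. -/
def mIntC (μ : Measure S) (f : S → ℂ) : ℂ := ∫ x, f x ∂μ

/-- `f̃ = f - ⟨μ, f⟩`. -/
def ctr (μ : Measure S) (f : S → ℝ) (x : S) : ℝ := f x - mInt μ f

/-- Coercion of a real function to a complex one. -/
def cf (f : S → ℝ) : S → ℂ := fun x => (f x : ℂ)

/-- The σ-field `ℋ_n = σ(X_j, j ∈ 𝕋_n)`. -/
def sigmaTree (X : List Bool → Ω → S) (n : ℕ) : MeasurableSpace Ω :=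
  ⨆ j ∈ treeUpTo n, MeasurableSpace.comap (X j) inferInstance

lemma treeUpTo_mono {a b : ℕ} (h : a ≤ b) : treeUpTo a ⊆ treeUpTo b := by
  intro i hi
  simp only [treeUpTo, Finset.mem_biUnion, Finset.mem_range] at hi ⊢
  obtain ⟨r, hr, hir⟩ := hi
  exact ⟨r, lt_of_lt_of_le hr (by omega), hir⟩

/-- The filtration `(ℋ_n = σ(X_i, i ∈ 𝕋_n))_{n ∈ ℕ}`. -/
def natFiltration (X : List Bool → Ω → S) (hX : ∀ i, Measurable (X i)) :
    Filtration ℕ (inferInstance : MeasurableSpace Ω) where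
  seq n := sigmaTree X n
  mono' := by
    intro a b hab
    exact biSup_mono fun j hj => treeUpTo_mono hab hj
  le' n := by
    refine iSup₂_le fun j _ => ?_
    exact (hX j).comap_le

/-- `X = (X_i, i ∈ 𝕋)` is a bifurcating Markov chain on `(S, 𝒮)` with initial
distribution `ν` and probability kernel `𝒫`, under the probability measure `m` on `Ω`. -/
structure IsBMC (P : Kernel S (S × S)) (ν : Measure S) (m : Measure Ω)
    (X : List Bool → Ω → S) : Prop where
  meas : ∀ i, Measurable (X i)
  init : m.map (X []) = ν
  branching : ∀ (n : ℕ) (g : List Bool → S → S × S → ℝ),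
    (∀ i, Measurable fun q : S × S × S => g i q.1 q.2) →
    (∀ i, ∃ C, ∀ x p, |g i x p| ≤ C) →
    (m[fun ω => ∏ i ∈ gen n, g i (X i ω) (X (i ++ [false]) ω, X (i ++ [true]) ω)
        | sigmaTree X n]
      =ᵐ[m] fun ω => ∏ i ∈ gen n, ∫ p, g i (X i ω) p ∂(P (X i ω)))

/-- Structural Assumption (F) on the set of functions `F`. -/
structure AssumpF (P : Kernel S (S × S)) (ν : Measure S) (F : Set (S → ℝ)) : Prop where
  meas : ∀ f ∈ F, Measurable f
  add_mem : ∀ f ∈ F, ∀ g ∈ F, f + g ∈ F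
  smul_mem : ∀ (c : ℝ), ∀ f ∈ F, c • f ∈ F
  const_mem : ∀ c : ℝ, (fun _ : S => c) ∈ F
  sq_mem : ∀ f ∈ F, (fun x => f x ^ 2) ∈ F
  int_nu : ∀ f ∈ F, Integrable f ν
  tens_int : ∀ f₀ ∈ F, ∀ f₁ ∈ F, ∀ x : S,
    Integrable (fun p : S × S => f₀ p.1 * f₁ p.2) (P x)
  tens_mem : ∀ f₀ ∈ F, ∀ f₁ ∈ F, Ptens P f₀ f₁ ∈ F

/-- Geometric ergodicity Assumption (H2) with rate `α`. -/
structure AssumpH2 (P : Kernel S (S × S)) (F : Set (S → ℝ)) (μ : Measure S) (α : ℝ) :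
    Prop where
  prob : IsProbabilityMeasure μ
  int_mu : ∀ f ∈ F, Integrable f μ
  erg : ∀ f ∈ F, ∃ g ∈ F, ∀ (n : ℕ) (x : S), |Qiter P n f x - mInt μ f| ≤ α ^ n * g x

/-- A sequence `𝔣` satisfies Assumption (H2) uniformly, with dominating function `g`. -/
def UnifH2 (P : Kernel S (S × S)) (μ : Measure S) (α : ℝ) (𝔣 : ℕ → S → ℝ) (g : S → ℝ) :
    Prop :=
  ∀ (n ℓ : ℕ) (x : S), |Qiter P n (𝔣 ℓ) x| ≤ g x ∧
    |Qiter P n (𝔣 ℓ) x - mInt μ (𝔣 ℓ)| ≤ α ^ n * g x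

/-- `N_{n,∅}(𝔣) = |𝔾_n|^{-1/2} ∑_{ℓ=0}^n M_{𝔾_{n-ℓ}}(f̃_ℓ)`. -/
def Nroot (μ : Measure S) (X : List Bool → Ω → S) (𝔣 : ℕ → S → ℝ) (n : ℕ) (ω : Ω) : ℝ :=
  (Real.sqrt (2 ^ n))⁻¹ * ∑ ℓ ∈ Finset.range (n + 1), MA X (gen (n - ℓ)) (ctr μ (𝔣 ℓ)) ω

/-- `N_{n,i}(𝔣) = |𝔾_n|^{-1/2} ∑_{ℓ=0}^{n-|i|} M_{i𝔾_{n-|i|-ℓ}}(f̃_ℓ)`. -/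
def Nni (μ : Measure S) (X : List Bool → Ω → S) (𝔣 : ℕ → S → ℝ) (n : ℕ) (i : List Bool)
    (ω : Ω) : ℝ :=
  (Real.sqrt (2 ^ n))⁻¹ *
    ∑ ℓ ∈ Finset.range (n - i.length + 1), MA X (desc i (n - i.length - ℓ)) (ctr μ (𝔣 ℓ)) ω

/-- Convergence in distribution to a centered Gaussian with variance `v`, expressed by
convergence of integrals of bounded continuous test functions. -/
def TendstoGauss (m : Measure Ω) (Y : ℕ → Ω → ℝ) (v : ℝ≥0) : Prop :=
  ∀ φ : BoundedContinuousFunction ℝ ℝ,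
    Tendsto (fun n => ∫ ω, φ (Y n ω) ∂m) atTop (𝓝 (∫ x, φ x ∂(gaussianReal 0 v)))

/-- Assumption (H3): a second spectral gap, with rate `α`, eigenvalues `(αj j)_{j ∈ J}`
of modulus `α`, projectors `R j`, and speed `β`. -/
structure AssumpH3 (P : Kernel S (S × S)) (F : Set (S → ℝ)) (μ : Measure S) (α : ℝ)
    {J : Type*} [Fintype J] [DecidableEq J] (αj : J → ℂ) (R : J → (S → ℂ) → S → ℂ) (β : ℕ → ℝ) :
    Prop where
  prob : IsProbabilityMeasure μ
  int_mu : ∀ f ∈ F, Integrable f μ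
  nonempty : Nonempty J
  inj : Function.Injective αj
  abs_eq : ∀ j, ‖αj j‖ = α
  Rlin : ∀ (j : J) (c : ℂ) (f g : S → ℂ),
    R j (fun x => c * f x + g x) = fun x => c * R j f x + R j g x
  Rorth : ∀ (j j' : J) (f : S → ℂ), R j (R j' f) = if j = j' then R j f else fun _ => 0
  Rne : ∀ j : J, ∃ f ∈ F, R j (cf f) ≠ fun _ => 0
  Rmeas : ∀ (j : J) (f : S → ℂ), Measurable f → Measurable (R j f)
  Reig : ∀ (j : J) (f : S → ℂ), QopC P (R j f) = fun x => αj j * R j f x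
  βpos : ∀ n, 0 < β n
  βle : ∀ n, β n ≤ 1
  βanti : Antitone β
  βlim : Tendsto β atTop (𝓝 0)
  erg : ∀ f ∈ F, ∃ g ∈ F, ∀ (n : ℕ) (x : S),
    ‖QiterC P n (cf f) x - (mInt μ f : ℂ)
      - (α : ℂ) ^ n * ∑ j, (αj j / (α : ℂ)) ^ n * R j (cf f) x‖ ≤ β n * α ^ n * g x

/-- `f̂ = f̃ - ∑_{j ∈ J} ℛ_j(f)`, as a complex-valued function. -/
def fhat {J : Type*} [Fintype J] (μ : Measure S) (R : J → (S → ℂ) → S → ℂ)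
    (f : S → ℝ) : S → ℂ :=
  fun x => (ctr μ f x : ℂ) - ∑ j, R j (cf f) x

/-- A sequence `𝔣` satisfies Assumption (H3) uniformly, with dominating function `g`. -/
def UnifH3 {J : Type*} [Fintype J] (P : Kernel S (S × S)) (μ : Measure S) (α : ℝ)
    (R : J → (S → ℂ) → S → ℂ) (β : ℕ → ℝ) (𝔣 : ℕ → S → ℝ) (g : S → ℝ) : Prop :=
  ∀ (n ℓ : ℕ) (x : S),
    ‖QiterC P n (cf (𝔣 ℓ)) x‖ ≤ g x ∧
    ‖QiterC P n (cf (ctr μ (𝔣 ℓ))) x‖ ≤ α ^ n * g x ∧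
    ‖QiterC P n (fhat μ R (𝔣 ℓ)) x‖ ≤ β n * α ^ n * g x

/-- `𝒫 f*_{k,ℓ}(x) = ∑_{j ∈ J} θ_j^{ℓ-k} 𝒫(ℛ_j(f_k) ⊗_sym ℛ̄_j(f_ℓ))(x)`, where
`ℛ̄_j(f) = conj (ℛ_j f)` for real `f`. -/
def Pfstar {J : Type*} [Fintype J] (P : Kernel S (S × S)) (α : ℝ) (αj : J → ℂ)
    (R : J → (S → ℂ) → S → ℂ) (𝔣 : ℕ → S → ℝ) (k ℓ : ℕ) (x : S) : ℂ :=
  ∑ j, (αj j / (α : ℂ)) ^ ((ℓ : ℤ) - (k : ℤ)) *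
    PtensSymC P (R j (cf (𝔣 k))) (fun y => starRingEnd ℂ (R j (cf (𝔣 ℓ)) y)) x


set_option linter.unusedSectionVars false
set_option maxHeartbeats 1000000
open scoped ENNReal

lemma mem_gen {n : ℕ} {i : List Bool} : i ∈ gen n ↔ i.length = n := by
  constructor
  · intro hi
    simp only [gen, Finset.mem_image] at hi
    obtain ⟨f, -, rfl⟩ := hi
    simp
  · intro h
    simp only [gen, Finset.mem_image]
    exact ⟨fun k => i.get (Fin.cast h.symm k), Finset.mem_univ _, by
      subst h; simp [List.ofFn_getElem]⟩

lemma card_gen (n : ℕ) : (gen n).card = 2 ^ n := by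
  rw [gen, Finset.card_image_of_injective _ (List.ofFn_injective), Finset.card_univ]
  simp [Fintype.card_fun]

lemma gen_succ (n : ℕ) :
    gen (n + 1) = ((gen n) ×ˢ (Finset.univ : Finset Bool)).image fun q => q.1 ++ [q.2] := by
  ext j
  simp only [mem_gen, Finset.mem_image, Finset.mem_product, Finset.mem_univ, and_true]
  constructor
  · intro hj
    have hne : j ≠ [] := by intro h; simp [h] at hj
    refine ⟨(j.dropLast, j.getLast hne), ?_, ?_⟩
    · simp [mem_gen, List.length_dropLast, hj]
    · simp [List.dropLast_append_getLast hne]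
  · rintro ⟨⟨i, b⟩, hi, rfl⟩
    simp only at hi
    simp [hi]

lemma sum_gen_succ {M : Type*} [AddCommMonoid M] (F : List Bool → M) (n : ℕ) :
    ∑ j ∈ gen (n + 1), F j = ∑ i ∈ gen n, (F (i ++ [false]) + F (i ++ [true])) := by
  rw [gen_succ, Finset.sum_image]
  · rw [Finset.sum_product]
    refine Finset.sum_congr rfl fun i _ => ?_
    simp [Fintype.sum_bool, add_comm]
  · rintro ⟨i₁, b₁⟩ - ⟨i₂, b₂⟩ - h
    simp only at h
    obtain ⟨h1, h2⟩ := List.append_inj' h (by simp)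
    simp_all

lemma gen_zero : gen 0 = {[]} := by
  ext j; simp [mem_gen, List.length_eq_zero_iff]

section Qlemmas

variable (P : Kernel S (S × S)) [IsMarkovKernel P]

lemma bdd_integrable {β : Type*} [MeasurableSpace β] {μ : Measure β} [IsFiniteMeasure μ] {f : β → ℝ}
    (hf : AEStronglyMeasurable f μ) {C : ℝ} (hb : ∀ ω, |f ω| ≤ C) : Integrable f μ :=
  (integrable_const C).mono' hf (Eventually.of_forall fun ω => by
    simpa [Real.norm_eq_abs] using hb ω)

lemma pair_meas {h : S → ℝ} (hm : Measurable h) :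
    Measurable fun p : S × S => (h p.1 + h p.2) / 2 :=
  ((hm.comp measurable_fst).add (hm.comp measurable_snd)).div_const 2

lemma pair_integrable {h : S → ℝ} (hm : Measurable h) {C : ℝ}
    (hb : ∀ x, |h x| ≤ C) (x : S) :
    Integrable (fun p : S × S => (h p.1 + h p.2) / 2) (P x) :=
  bdd_integrable (pair_meas hm).aestronglyMeasurable
    (C := C) fun p => by
      have := hb p.1; have := hb p.2
      rw [abs_div]
      calc |h p.1 + h p.2| / |(2:ℝ)| ≤ (|h p.1| + |h p.2|) / 2 := by
            rw [abs_two]; gcongr; exact abs_add_le _ _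
        _ ≤ C := by linarith

lemma Qop_measurable {h : S → ℝ} (hm : Measurable h) : Measurable (Qop P h) := by
  have : StronglyMeasurable fun x : S => ∫ p, ((fun q : S × (S × S) =>
      (h q.2.1 + h q.2.2) / 2) (x, p)) ∂(P x) :=
    (((hm.comp (measurable_fst.comp measurable_snd)).add
      (hm.comp (measurable_snd.comp measurable_snd))).div_const 2)
      |>.stronglyMeasurable.integral_kernel_prod_right'
  exact this.measurable

lemma Qop_abs_le {h : S → ℝ} (hm : Measurable h) {C : ℝ} (hb : ∀ x, |h x| ≤ C) (x : S) :
    |Qop P h x| ≤ C := by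
  have h1 : |Qop P h x| ≤ ∫ p, |h p.1 + h p.2| / 2 ∂(P x) := by
    simpa [Real.norm_eq_abs, Qop] using
      norm_integral_le_integral_norm (μ := P x) (fun p : S × S => (h p.1 + h p.2) / 2)
  refine h1.trans ?_
  have habs : Integrable (fun p : S × S => |h p.1 + h p.2| / 2) (P x) := by
    simpa [abs_div, abs_two] using (pair_integrable P hm hb x).abs
  have h2 : ∫ p, |h p.1 + h p.2| / 2 ∂(P x) ≤ ∫ _, C ∂(P x) := by
    refine integral_mono habs (integrable_const C) fun p => ?_
    have := hb p.1; have := hb p.2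
    have : |h p.1 + h p.2| ≤ 2 * C := (abs_add_le _ _).trans (by linarith)
    linarith
  simpa using h2

omit [IsMarkovKernel P] in
lemma Qop_mono {h₁ h₂ : S → ℝ}
    (hi₁ : ∀ x, Integrable (fun p : S × S => (h₁ p.1 + h₁ p.2) / 2) (P x))
    (hi₂ : ∀ x, Integrable (fun p : S × S => (h₂ p.1 + h₂ p.2) / 2) (P x))
    (hle : ∀ x, h₁ x ≤ h₂ x) (x : S) : Qop P h₁ x ≤ Qop P h₂ x := by
  refine integral_mono (hi₁ x) (hi₂ x) fun p => ?_
  have := hle p.1; have := hle p.2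
  dsimp; linarith

lemma Qiter_meas_bdd {h : S → ℝ} (hm : Measurable h) {C : ℝ} (hb : ∀ x, |h x| ≤ C) :
    ∀ k, Measurable (Qiter P k h) ∧ ∀ x, |Qiter P k h x| ≤ C := by
  intro k
  induction k with
  | zero => exact ⟨hm, hb⟩
  | succ k ih =>
    rw [Qiter, Function.iterate_succ_apply']
    exact ⟨Qop_measurable P ih.1, Qop_abs_le P ih.1 ih.2⟩

end Qlemmas

section Flemmas

variable (P : Kernel S (S × S)) [IsMarkovKernel P] (ν : Measure S) {F : Set (S → ℝ)}

lemma intF (hF : AssumpF P ν F) {f : S → ℝ} (hf : f ∈ F) (x : S) :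
    Integrable (fun p : S × S => (f p.1 + f p.2) / 2) (P x) := by
  have h1 := hF.tens_int f hf (fun _ => (1:ℝ)) (hF.const_mem 1) x
  have h2 := hF.tens_int (fun _ => (1:ℝ)) (hF.const_mem 1) f hf x
  have heq : (fun p : S × S => (f p.1 + f p.2) / 2)
      = fun p : S × S => (f p.1 * 1 + 1 * f p.2) * (1/2) := by funext p; ring
  rw [heq]; exact (h1.add h2).mul_const _

lemma QopF (hF : AssumpF P ν F) {f : S → ℝ} (hf : f ∈ F) : Qop P f ∈ F := by
  have h1 := hF.tens_int f hf (fun _ => (1:ℝ)) (hF.const_mem 1)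
  have h2 := hF.tens_int (fun _ => (1:ℝ)) (hF.const_mem 1) f hf
  have heq : Qop P f = (1/2 : ℝ) • (Ptens P f (fun _ => 1) + Ptens P (fun _ => 1) f) := by
    funext x
    have h3 : Qop P f x = ∫ p, (f p.1 * 1 + 1 * f p.2) * (1/2) ∂(P x) := by
      rw [Qop]; congr 1; funext p; ring
    rw [h3, integral_mul_const, integral_add (h1 x) (h2 x)]
    simp only [Ptens, Pi.smul_apply, Pi.add_apply, smul_eq_mul]
    ring
  rw [heq]
  exact hF.smul_mem _ _ (hF.add_mem _ (hF.tens_mem f hf _ (hF.const_mem 1)) _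
    (hF.tens_mem _ (hF.const_mem 1) f hf))

lemma QiterF (hF : AssumpF P ν F) {f : S → ℝ} (hf : f ∈ F) (k : ℕ) : Qiter P k f ∈ F := by
  induction k with
  | zero => simpa [Qiter] using hf
  | succ k ih =>
    rw [Qiter, Function.iterate_succ_apply']
    exact QopF P ν hF ih

lemma Qiter_mono (hF : AssumpF P ν F) {h f : S → ℝ} (hmh : Measurable h) {C : ℝ}
    (hb : ∀ x, |h x| ≤ C) (hf : f ∈ F) (hle : ∀ x, h x ≤ f x) (k : ℕ) (x : S) :
    Qiter P k h x ≤ Qiter P k f x := by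
  induction k generalizing x with
  | zero => simpa [Qiter] using hle x
  | succ k ih =>
    simp only [Qiter, Function.iterate_succ_apply']
    exact Qop_mono P
      (fun y => pair_integrable P (Qiter_meas_bdd P hmh hb k).1 (Qiter_meas_bdd P hmh hb k).2 y)
      (fun y => intF P ν hF (QiterF P ν hF hf k) y) (fun y => ih y) x

end Flemmas

section Expect

variable {P : Kernel S (S × S)} [IsMarkovKernel P] {ν : Measure S} {m : Measure Ω}
  [IsProbabilityMeasure m] {X : List Bool → Ω → S}

lemma sigmaTree_le (hX : ∀ i, Measurable (X i)) (n : ℕ) :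
    sigmaTree X n ≤ (inferInstance : MeasurableSpace Ω) :=
  iSup₂_le fun j _ => (hX j).comap_le

lemma node_expectation (hBMC : IsBMC P ν m X) {h : S → ℝ} (hm : Measurable h) {C : ℝ}
    (hb : ∀ x, |h x| ≤ C) {n : ℕ} {i : List Bool} (hi : i ∈ gen n) :
    ∫ ω, (h (X (i ++ [false]) ω) + h (X (i ++ [true]) ω)) ∂m
      = ∫ ω, 2 * Qop P h (X i ω) ∂m := by
  classical
  have hle := sigmaTree_le hBMC.meas n
  set g : List Bool → S → S × S → ℝ := fun j _ p => if j = i then h p.1 + h p.2 else 1 with hg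
  have hmeas : ∀ j, Measurable fun q : S × S × S => g j q.1 q.2 := by
    intro j
    by_cases hj : j = i
    · have hm2 : Measurable fun q : S × S × S => h q.2.1 + h q.2.2 :=
        ((hm.comp (measurable_fst.comp measurable_snd)).add
        (hm.comp (measurable_snd.comp measurable_snd)))
      simpa [g, hj] using hm2
    · simpa [g, hj] using measurable_const
  have hbd : ∀ j, ∃ C', ∀ x p, |g j x p| ≤ C' := by
    intro j
    refine ⟨|C| + |C| + 1, fun x p => ?_⟩
    by_cases hj : j = i
    · simp only [g, hj, if_pos rfl]
      have h1 := (hb p.1).trans (le_abs_self C)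
      have h2 := (hb p.2).trans (le_abs_self C)
      have := abs_add_le (h p.1) (h p.2)
      linarith
    · simp only [g, if_neg hj, abs_one]
      linarith [abs_nonneg C]
  have hbr := hBMC.branching n g hmeas hbd
  have hprod : (fun ω => ∏ j ∈ gen n, g j (X j ω) (X (j ++ [false]) ω, X (j ++ [true]) ω))
      = fun ω => h (X (i ++ [false]) ω) + h (X (i ++ [true]) ω) := by
    funext ω
    rw [Finset.prod_eq_single_of_mem i hi (fun j _ hj => by simp [g, hj])]
    simp [g]
  have hprod2 : (fun ω => ∏ j ∈ gen n, ∫ p, g j (X j ω) p ∂(P (X j ω)))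
      = fun ω => ∫ p, (h p.1 + h p.2) ∂(P (X i ω)) := by
    funext ω
    rw [Finset.prod_eq_single_of_mem i hi (fun j _ hj => by simp [g, hj])]
    simp [g]
  rw [hprod, hprod2] at hbr
  have hint : ∫ ω, (h (X (i ++ [false]) ω) + h (X (i ++ [true]) ω)) ∂m
      = ∫ ω, (m[fun ω => h (X (i ++ [false]) ω) + h (X (i ++ [true]) ω) | sigmaTree X n]) ω ∂m :=
    (integral_condExp hle).symm
  rw [hint, integral_congr_ae hbr]
  refine integral_congr_ae (Eventually.of_forall fun ω => ?_)
  dsimp only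
  have h4 : Qop P h (X i ω) = (∫ p, (h p.1 + h p.2) ∂(P (X i ω))) / 2 := by
    rw [Qop, integral_div]
  rw [h4]; ring

lemma step_expectation (hBMC : IsBMC P ν m X) {h : S → ℝ} (hm : Measurable h) {C : ℝ}
    (hb : ∀ x, |h x| ≤ C) (n : ℕ) :
    ∫ ω, ∑ j ∈ gen (n + 1), h (X j ω) ∂m = 2 * ∫ ω, ∑ i ∈ gen n, Qop P h (X i ω) ∂m := by
  have hint : ∀ (f : S → ℝ), Measurable f → ∀ (C' : ℝ), (∀ x, |f x| ≤ C') →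
      ∀ j : List Bool, Integrable (fun ω => f (X j ω)) m := fun f hf C' hC' j =>
    bdd_integrable (hf.comp (hBMC.meas j)).aestronglyMeasurable fun ω => hC' _
  have hsum : (fun ω => ∑ j ∈ gen (n + 1), h (X j ω))
      = fun ω => ∑ i ∈ gen n, (h (X (i ++ [false]) ω) + h (X (i ++ [true]) ω)) := by
    funext ω
    exact sum_gen_succ (fun j => h (X j ω)) n
  have h1 : ∀ i ∈ gen n,
      Integrable (fun ω => h (X (i ++ [false]) ω) + h (X (i ++ [true]) ω)) m := fun i _ => by
    exact (hint h hm C hb (i ++ [false])).add (hint h hm C hb (i ++ [true]))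
  rw [hsum, integral_finset_sum _ h1]
  have hQm := Qop_measurable P hm
  have hQb := Qop_abs_le P hm hb
  rw [integral_finset_sum _ (fun i _ => hint (Qop P h) hQm C hQb i), Finset.mul_sum]
  refine Finset.sum_congr rfl fun i hi => ?_
  rw [node_expectation hBMC hm hb hi, ← integral_const_mul]

lemma gen_expectation (hBMC : IsBMC P ν m X) {h : S → ℝ} (hm : Measurable h) {C : ℝ}
    (hb : ∀ x, |h x| ≤ C) (k : ℕ) :
    ∫ ω, ∑ j ∈ gen k, h (X j ω) ∂m = 2 ^ k * ∫ x, Qiter P k h x ∂ν := by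
  induction k generalizing h C with
  | zero =>
    rw [gen_zero]
    simp only [Finset.sum_singleton, pow_zero, one_mul, Qiter, Function.iterate_zero, id_eq]
    rw [← hBMC.init, integral_map (hBMC.meas []).aemeasurable hm.aestronglyMeasurable]
  | succ k ih =>
    rw [step_expectation hBMC hm hb k,
      ih (Qop_measurable P hm) (Qop_abs_le P hm hb)]
    have : Qiter P k (Qop P h) = Qiter P (k + 1) h := by
      funext x
      simp [Qiter, Function.iterate_succ_apply]
    rw [this]; ring

end Expect

section Moment

variable {P : Kernel S (S × S)} [IsMarkovKernel P] {ν : Measure S} [IsProbabilityMeasure ν]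
  {m : Measure Ω} [IsProbabilityMeasure m] {X : List Bool → Ω → S} {F : Set (S → ℝ)}

lemma node_lintegral_bound (hBMC : IsBMC P ν m X) (hF : AssumpF P ν F)
    {h : S → ℝ} (hhF : h ∈ F) (hh0 : ∀ x, 0 ≤ h x) {C0 : ℝ}
    (hC0 : ∀ k, ∫ x, Qiter P k h x ∂ν ≤ C0) (k : ℕ) {i : List Bool} (hi : i ∈ gen k) :
    ∫⁻ ω, ENNReal.ofReal (h (X i ω)) ∂m ≤ ENNReal.ofReal (2 ^ k * C0) := by
  classical
  set T : ℕ → S → ℝ := fun M x => min (h x) (M : ℝ) with hT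
  have hmh := hF.meas h hhF
  have hmT : ∀ M : ℕ, Measurable (T M) := fun M => hmh.min measurable_const
  have hT0 : ∀ (M : ℕ) (x : S), 0 ≤ T M x := fun M x => le_min (hh0 x) (Nat.cast_nonneg M)
  have hbT : ∀ (M : ℕ) (x : S), |T M x| ≤ (M : ℝ) := fun M x => by
    rw [abs_of_nonneg (hT0 M x)]; exact min_le_right _ _
  have hTle : ∀ (M : ℕ) (x : S), T M x ≤ h x := fun M x => min_le_left _ _
  have hXint : ∀ (M : ℕ) (j : List Bool), Integrable (fun ω => T M (X j ω)) m := fun M j =>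
    bdd_integrable ((hmT M).comp (hBMC.meas j)).aestronglyMeasurable (fun ω => hbT M _)
  have key : ∀ M : ℕ, ∫ ω, T M (X i ω) ∂m ≤ 2 ^ k * C0 := by
    intro M
    have h1 : ∫ ω, T M (X i ω) ∂m ≤ ∫ ω, ∑ j ∈ gen k, T M (X j ω) ∂m := by
      refine integral_mono (hXint M i) (integrable_finset_sum _ fun j _ => hXint M j) fun ω => ?_
      exact Finset.single_le_sum (f := fun j => T M (X j ω)) (fun j _ => hT0 M _) hi
    have h2 : ∫ ω, ∑ j ∈ gen k, T M (X j ω) ∂m = 2 ^ k * ∫ x, Qiter P k (T M) x ∂ν :=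
      gen_expectation hBMC (hmT M) (hbT M) k
    have h3 : ∫ x, Qiter P k (T M) x ∂ν ≤ ∫ x, Qiter P k h x ∂ν :=
      integral_mono
        (bdd_integrable (Qiter_meas_bdd P (hmT M) (hbT M) k).1.aestronglyMeasurable
          (fun x => (Qiter_meas_bdd P (hmT M) (hbT M) k).2 x))
        (hF.int_nu _ (QiterF P ν hF hhF k))
        (fun x => Qiter_mono P ν hF (hmT M) (hbT M) hhF (hTle M) k x)
    refine h1.trans ?_
    rw [h2]
    have h4 : (0:ℝ) ≤ 2 ^ k := by positivity
    exact mul_le_mul_of_nonneg_left (h3.trans (hC0 k)) h4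
  have hmeasM : ∀ M : ℕ, Measurable fun ω => ENNReal.ofReal (T M (X i ω)) := fun M =>
    ENNReal.measurable_ofReal.comp ((hmT M).comp (hBMC.meas i))
  have hmono : Monotone fun M : ℕ => fun ω => ENNReal.ofReal (T M (X i ω)) := by
    intro M M' hMM' ω
    exact ENNReal.ofReal_le_ofReal (min_le_min le_rfl (Nat.cast_le.mpr hMM'))
  have hsup : (fun ω => ENNReal.ofReal (h (X i ω)))
      = fun ω => ⨆ M : ℕ, ENNReal.ofReal (T M (X i ω)) := by
    funext ω
    refine le_antisymm ?_ (iSup_le fun M => ENNReal.ofReal_le_ofReal (hTle M _))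
    refine le_iSup_of_le ⌈h (X i ω)⌉₊ ?_
    rw [show T ⌈h (X i ω)⌉₊ (X i ω) = h (X i ω) from min_eq_left (Nat.le_ceil _)]
  rw [hsup, lintegral_iSup hmeasM hmono]
  refine iSup_le fun M => ?_
  rw [← ofReal_integral_eq_lintegral_ofReal (hXint M i)
    (Eventually.of_forall fun ω => hT0 M _)]
  exact ENNReal.ofReal_le_ofReal (key M)

end Moment

section ELp

variable {m : Measure Ω}

lemma sq_eLpNorm (Y : Ω → ℝ) :
    eLpNorm Y 2 m ^ 2 = ∫⁻ ω, ENNReal.ofReal (Y ω ^ 2) ∂m := by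
  rw [eLpNorm_eq_lintegral_rpow_enorm_toReal two_ne_zero ENNReal.ofNat_ne_top]
  have htr : (2 : ℝ≥0∞).toReal = (2:ℝ) := by norm_num
  rw [htr, ← ENNReal.rpow_two, ← ENNReal.rpow_mul]
  norm_num
  refine lintegral_congr fun ω => ?_
  rw [Real.enorm_eq_ofReal_abs, ← ENNReal.ofReal_pow (abs_nonneg _), sq_abs]

lemma le_of_sq_le_sq {a b : ℝ≥0∞} (h : a ^ 2 ≤ b ^ 2) : a ≤ b := by
  have h2 := ENNReal.rpow_le_rpow h (by norm_num : (0:ℝ) ≤ 1/2)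
  rwa [← ENNReal.rpow_two, ← ENNReal.rpow_two, ← ENNReal.rpow_mul, ← ENNReal.rpow_mul,
    (by norm_num : (2:ℝ) * (1/2) = 1), ENNReal.rpow_one, ENNReal.rpow_one] at h2

lemma integral_sq_eq (Y : Ω → ℝ) (hY : AEStronglyMeasurable Y m) :
    ∫ ω, Y ω ^ 2 ∂m = (eLpNorm Y 2 m ^ 2).toReal := by
  rw [sq_eLpNorm]
  refine integral_eq_lintegral_of_nonneg_ae (Eventually.of_forall fun ω => sq_nonneg _) ?_
  have : (fun ω => Y ω ^ 2) = fun ω => Y ω * Y ω := funext fun ω => sq (Y ω)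
  rw [this]; exact hY.mul hY

end ELp

/-- **Lemma (sub-critical: the remainder `R₀` vanishes in `L²`).** -/
theorem subcritical_R0
    {S : Type*} [MeasurableSpace S] {Ω : Type*} [MeasurableSpace Ω]
    (P : Kernel S (S × S)) [IsMarkovKernel P]
    (ν : Measure S) [IsProbabilityMeasure ν]
    (m : Measure Ω) [IsProbabilityMeasure m]
    (X : List Bool → Ω → S) (hBMC : IsBMC P ν m X)
    (F : Set (S → ℝ)) (hF : AssumpF P ν F)
    (μ : Measure S) (α : ℝ) (hα0 : 0 < α) (hα1 : α < 1 / Real.sqrt 2)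
    (hH2 : AssumpH2 P F μ α)
    (𝔣 : ℕ → S → ℝ) (h𝔣 : ∀ ℓ, 𝔣 ℓ ∈ F)
    (g : S → ℝ) (hg : g ∈ F) (hunif : UnifH2 P μ α 𝔣 g)
    (p : ℕ → ℕ) (hp_mono : Monotone p) (hp_pos : ∀ n, 1 ≤ p n)
    (hp_lt : ∀ᶠ n in atTop, p n < n)
    (hp_ratio : Tendsto (fun n => (p n : ℝ) / n) atTop (𝓝 1))
    (hp_log : ∀ lam : ℝ, 0 < lam →
      Tendsto (fun n : ℕ => (n : ℝ) - p n - lam * Real.log n) atTop atTop) :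
    Tendsto (fun n => ∫ ω,
        ((Real.sqrt (2 ^ n))⁻¹ *
          ∑ k ∈ Finset.range (n - p n), MA X (gen k) (ctr μ (𝔣 (n - k))) ω) ^ 2 ∂m)
      atTop (𝓝 0) := by
  classical
  set h : S → ℝ := fun x => g x ^ 2 with hh
  have hhF : h ∈ F := hF.sq_mem g hg
  have hh0 : ∀ x, 0 ≤ h x := fun x => sq_nonneg _
  obtain ⟨G, hGF, hGerg⟩ := hH2.erg h hhF
  have hG0 : ∀ x, 0 ≤ G x := fun x => by
    have h1 := hGerg 0 x
    simp only [pow_zero, one_mul] at h1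
    exact (abs_nonneg _).trans h1
  have hα_le1 : α ≤ 1 := by
    have h2 : (1:ℝ) ≤ Real.sqrt 2 := by
      rw [show (1:ℝ) = Real.sqrt 1 by simp]
      exact Real.sqrt_le_sqrt (by norm_num)
    have h3 : 1 / Real.sqrt 2 ≤ 1 := by
      rw [div_le_one (by linarith)]
      exact h2
    linarith
  set C0 : ℝ := |mInt μ h| + ∫ x, G x ∂ν with hC0def
  have hC0nonneg : 0 ≤ C0 := add_nonneg (abs_nonneg _) (integral_nonneg hG0)
  have hC0 : ∀ k, ∫ x, Qiter P k h x ∂ν ≤ C0 := by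
    intro k
    have hpt : ∀ x, Qiter P k h x ≤ |mInt μ h| + G x := by
      intro x
      have h1 := (abs_le.mp (hGerg k x)).2
      have h2 : α ^ k ≤ 1 := pow_le_one₀ hα0.le hα_le1
      have h3 : α ^ k * G x ≤ 1 * G x := mul_le_mul_of_nonneg_right h2 (hG0 x)
      have h4 := le_abs_self (mInt μ h)
      linarith
    calc ∫ x, Qiter P k h x ∂ν ≤ ∫ x, (|mInt μ h| + G x) ∂ν :=
          integral_mono (hF.int_nu _ (QiterF P ν hF hhF k))
            ((integrable_const _).add (hF.int_nu G hGF)) hpt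
      _ = C0 := by
          rw [integral_add (integrable_const _) (hF.int_nu G hGF), integral_const]
          simp [hC0def]
  -- pointwise control of the centered functions
  have hctr : ∀ (ℓ : ℕ) (x : S), |ctr μ (𝔣 ℓ) x| ≤ g x := by
    intro ℓ x
    have h1 := (hunif 0 ℓ x).2
    simpa [Qiter, ctr] using h1
  have hctrsq : ∀ (ℓ : ℕ) (x : S), ctr μ (𝔣 ℓ) x ^ 2 ≤ h x := by
    intro ℓ x
    have h1 : ctr μ (𝔣 ℓ) x ^ 2 ≤ g x ^ 2 := by
      rw [← sq_abs]
      exact pow_le_pow_left₀ (abs_nonneg _) (hctr ℓ x) 2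
    simpa [hh] using h1
  -- per-node L² bound
  have hnode : ∀ (k : ℕ), ∀ i ∈ gen k, ∀ ℓ : ℕ,
      eLpNorm (fun ω => ctr μ (𝔣 ℓ) (X i ω)) 2 m ≤ ENNReal.ofReal (2 ^ k * (1 + C0)) := by
    intro k i hi ℓ
    refine le_of_sq_le_sq ?_
    rw [sq_eLpNorm]
    have hb1 : ∫⁻ ω, ENNReal.ofReal (ctr μ (𝔣 ℓ) (X i ω) ^ 2) ∂m
        ≤ ∫⁻ ω, ENNReal.ofReal (h (X i ω)) ∂m :=
      lintegral_mono fun ω => ENNReal.ofReal_le_ofReal (hctrsq ℓ _)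
    refine hb1.trans ((node_lintegral_bound hBMC hF hhF hh0 hC0 k hi).trans ?_)
    rw [← ENNReal.ofReal_pow (by positivity)]
    refine ENNReal.ofReal_le_ofReal ?_
    have h2k : (1:ℝ) ≤ 2 ^ k := one_le_pow₀ (by norm_num)
    nlinarith [hC0nonneg, sq_nonneg (1 + C0)]
  -- measurability of MA summands
  have hctrm : ∀ ℓ : ℕ, Measurable (ctr μ (𝔣 ℓ)) := fun ℓ =>
    (hF.meas _ (h𝔣 ℓ)).sub measurable_const
  have hMAmeas : ∀ (k ℓ : ℕ), AEStronglyMeasurable (fun ω => MA X (gen k) (ctr μ (𝔣 ℓ)) ω) m :=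
    fun k ℓ => (Finset.measurable_sum _ fun i _ =>
      (hctrm ℓ).comp (hBMC.meas i)).aestronglyMeasurable
  -- per-generation bound
  have hgen2 : ∀ (k ℓ : ℕ),
      eLpNorm (fun ω => MA X (gen k) (ctr μ (𝔣 ℓ)) ω) 2 m
        ≤ ENNReal.ofReal (4 ^ k * (1 + C0)) := by
    intro k ℓ
    have hMA : (fun ω => MA X (gen k) (ctr μ (𝔣 ℓ)) ω)
        = ∑ i ∈ gen k, (fun ω => ctr μ (𝔣 ℓ) (X i ω)) := by
      funext ω; simp [MA]
    rw [hMA]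
    have hmeas : ∀ i ∈ gen k, AEStronglyMeasurable (fun ω => ctr μ (𝔣 ℓ) (X i ω)) m :=
      fun i _ => ((hctrm ℓ).comp (hBMC.meas i)).aestronglyMeasurable
    refine (eLpNorm_sum_le hmeas one_le_two).trans ?_
    calc ∑ i ∈ gen k, eLpNorm (fun ω => ctr μ (𝔣 ℓ) (X i ω)) 2 m
        ≤ ∑ _i ∈ gen k, ENNReal.ofReal (2 ^ k * (1 + C0)) :=
          Finset.sum_le_sum fun i hi => hnode k i hi ℓ
      _ = (gen k).card • ENNReal.ofReal (2 ^ k * (1 + C0)) := Finset.sum_const _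
      _ = ENNReal.ofReal (4 ^ k * (1 + C0)) := by
          rw [card_gen, nsmul_eq_mul, ← ENNReal.ofReal_natCast,
            ← ENNReal.ofReal_mul (by positivity)]
          congr 1
          push_cast
          rw [show (4:ℝ) ^ k = 2 ^ k * 2 ^ k by rw [← mul_pow]; norm_num]
          ring
  have hgeom : ∀ K : ℕ, ∑ k ∈ Finset.range K, (4:ℝ) ^ k ≤ 4 ^ K := by
    intro K
    induction K with
    | zero => simp
    | succ K ih =>
      rw [Finset.sum_range_succ, pow_succ]
      nlinarith [pow_nonneg (by norm_num : (0:ℝ) ≤ 4) K]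
  -- bound for the full sum
  have htot : ∀ n : ℕ,
      eLpNorm (fun ω => ∑ k ∈ Finset.range (n - p n), MA X (gen k) (ctr μ (𝔣 (n - k))) ω) 2 m
        ≤ ENNReal.ofReal (4 ^ (n - p n) * (1 + C0)) := by
    intro n
    have hsum_eq : (fun ω => ∑ k ∈ Finset.range (n - p n), MA X (gen k) (ctr μ (𝔣 (n - k))) ω)
        = ∑ k ∈ Finset.range (n - p n), (fun ω => MA X (gen k) (ctr μ (𝔣 (n - k))) ω) := by
      funext ω; simp
    rw [hsum_eq]
    refine (eLpNorm_sum_le (fun k _ => hMAmeas k (n - k)) one_le_two).trans ?_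
    calc ∑ k ∈ Finset.range (n - p n), eLpNorm (fun ω => MA X (gen k) (ctr μ (𝔣 (n - k))) ω) 2 m
        ≤ ∑ k ∈ Finset.range (n - p n), ENNReal.ofReal (4 ^ k * (1 + C0)) :=
          Finset.sum_le_sum fun k _ => hgen2 k (n - k)
      _ = ENNReal.ofReal (∑ k ∈ Finset.range (n - p n), 4 ^ k * (1 + C0)) :=
          (ENNReal.ofReal_sum_of_nonneg fun k _ => by positivity).symm
      _ ≤ ENNReal.ofReal (4 ^ (n - p n) * (1 + C0)) := by
          refine ENNReal.ofReal_le_ofReal ?_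
          rw [← Finset.sum_mul]
          exact mul_le_mul_of_nonneg_right (hgeom _) (by linarith)
  -- the full quantity
  have hYm : ∀ n : ℕ, AEStronglyMeasurable (fun ω => (Real.sqrt (2 ^ n))⁻¹ *
      ∑ k ∈ Finset.range (n - p n), MA X (gen k) (ctr μ (𝔣 (n - k))) ω) m := fun n =>
    (measurable_const.mul (Finset.measurable_sum _ fun k _ =>
      Finset.measurable_sum _ fun i _ => (hctrm (n - k)).comp (hBMC.meas i))).aestronglyMeasurable
  have hYb : ∀ n : ℕ, eLpNorm (fun ω => (Real.sqrt (2 ^ n))⁻¹ *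
      ∑ k ∈ Finset.range (n - p n), MA X (gen k) (ctr μ (𝔣 (n - k))) ω) 2 m
        ≤ ENNReal.ofReal ((Real.sqrt (2 ^ n))⁻¹ * (4 ^ (n - p n) * (1 + C0))) := by
    intro n
    have hsmul : (fun ω => (Real.sqrt (2 ^ n))⁻¹ *
        ∑ k ∈ Finset.range (n - p n), MA X (gen k) (ctr μ (𝔣 (n - k))) ω)
        = (Real.sqrt (2 ^ n))⁻¹ •
          (fun ω => ∑ k ∈ Finset.range (n - p n), MA X (gen k) (ctr μ (𝔣 (n - k))) ω) := by
      funext ω; simp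
    rw [hsmul, eLpNorm_const_smul]
    have hc : (0:ℝ) ≤ (Real.sqrt (2 ^ n))⁻¹ := by positivity
    have hnn : ‖(Real.sqrt (2 ^ n))⁻¹‖ₑ = ENNReal.ofReal ((Real.sqrt (2 ^ n))⁻¹) := by
      rw [Real.enorm_eq_ofReal_abs, abs_of_nonneg hc]
    rw [hnn, ENNReal.ofReal_mul hc]
    exact mul_le_mul' le_rfl (htot n)
  set r : ℕ → ℝ := fun n => ((Real.sqrt (2 ^ n))⁻¹ * (4 ^ (n - p n) * (1 + C0))) ^ 2 with hrdef
  have hub : ∀ n : ℕ, ∫ ω, ((Real.sqrt (2 ^ n))⁻¹ *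
      ∑ k ∈ Finset.range (n - p n), MA X (gen k) (ctr μ (𝔣 (n - k))) ω) ^ 2 ∂m ≤ r n := by
    intro n
    rw [integral_sq_eq _ (hYm n)]
    have h1 : eLpNorm (fun ω => (Real.sqrt (2 ^ n))⁻¹ *
        ∑ k ∈ Finset.range (n - p n), MA X (gen k) (ctr μ (𝔣 (n - k))) ω) 2 m ^ 2
        ≤ ENNReal.ofReal ((Real.sqrt (2 ^ n))⁻¹ * (4 ^ (n - p n) * (1 + C0))) ^ 2 := by
      rw [pow_two, pow_two]
      exact mul_le_mul' (hYb n) (hYb n)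
    have h2 : (ENNReal.ofReal ((Real.sqrt (2 ^ n))⁻¹ * (4 ^ (n - p n) * (1 + C0)))) ^ 2
        = ENNReal.ofReal (((Real.sqrt (2 ^ n))⁻¹ * (4 ^ (n - p n) * (1 + C0))) ^ 2) :=
      (ENNReal.ofReal_pow (by positivity) 2).symm
    rw [h2] at h1
    have h3 := ENNReal.toReal_mono ENNReal.ofReal_ne_top h1
    rwa [ENNReal.toReal_ofReal (by positivity)] at h3
  have hlb : ∀ n : ℕ, (0:ℝ) ≤ ∫ ω, ((Real.sqrt (2 ^ n))⁻¹ *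
      ∑ k ∈ Finset.range (n - p n), MA X (gen k) (ctr μ (𝔣 (n - k))) ω) ^ 2 ∂m :=
    fun n => integral_nonneg fun ω => sq_nonneg _
  -- convergence of the bound
  have hq0 : (0:ℝ) ≤ (2:ℝ) ^ (-(3/4) : ℝ) := Real.rpow_nonneg (by norm_num) _
  have hq1 : (2:ℝ) ^ (-(3/4) : ℝ) < 1 :=
    Real.rpow_lt_one_of_one_lt_of_neg (by norm_num) (by norm_num)
  have hev : ∀ᶠ n : ℕ in atTop, r n ≤ (1 + C0) ^ 2 * ((2:ℝ) ^ (-(3/4) : ℝ)) ^ n := by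
    filter_upwards [hp_lt, hp_ratio.eventually (eventually_ge_nhds
      (by norm_num : (15/16:ℝ) < 1)), eventually_ge_atTop 1] with n hn1 hn2 hn3
    have hnpos : (0:ℝ) < n := by exact_mod_cast hn3
    have hKle : ((n - p n : ℕ) : ℝ) ≤ (n:ℝ) / 16 := by
      rw [Nat.cast_sub hn1.le]
      have h5 : (15:ℝ)/16 * n ≤ p n := by
        rw [le_div_iff₀ hnpos] at hn2
        exact hn2
      linarith
    have h16 : ((16:ℝ)) ^ (n - p n) ≤ (2:ℝ) ^ ((n:ℝ)/4) := by
      calc ((16:ℝ)) ^ (n - p n) = (16:ℝ) ^ (((n - p n : ℕ)):ℝ) := (Real.rpow_natCast _ _).symm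
        _ ≤ (16:ℝ) ^ ((n:ℝ)/16) := Real.rpow_le_rpow_of_exponent_le (by norm_num) hKle
        _ = (2:ℝ) ^ ((n:ℝ)/4) := by
            rw [show (16:ℝ) = (2:ℝ) ^ (4:ℝ) by
              rw [show (4:ℝ) = ((4:ℕ):ℝ) by norm_num, Real.rpow_natCast]; norm_num,
              ← Real.rpow_mul (by norm_num : (0:ℝ) ≤ 2)]
            ring_nf
    have hr_eq : r n = (2 ^ n : ℝ)⁻¹ * (16 ^ (n - p n) * (1 + C0) ^ 2) := by
      simp only [hrdef]
      have h6 : ((Real.sqrt (2 ^ n))⁻¹) ^ 2 = ((2:ℝ) ^ n)⁻¹ := by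
        rw [inv_pow, Real.sq_sqrt (by positivity)]
      have h6b : ((4:ℝ) ^ (n - p n)) ^ 2 = 16 ^ (n - p n) := by
        rw [← pow_mul, show (16:ℝ) = 4 ^ 2 by norm_num, ← pow_mul, Nat.mul_comm]
      rw [mul_pow, h6, mul_pow, h6b]
    rw [hr_eq]
    have h7 : (2 ^ n : ℝ)⁻¹ * (16 ^ (n - p n) * (1 + C0) ^ 2)
        ≤ (2 ^ n : ℝ)⁻¹ * ((2:ℝ) ^ ((n:ℝ)/4) * (1 + C0) ^ 2) := by
      have : (0:ℝ) ≤ (2 ^ n : ℝ)⁻¹ := by positivity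
      have h8 : (16:ℝ) ^ (n - p n) * (1 + C0) ^ 2 ≤ (2:ℝ) ^ ((n:ℝ)/4) * (1 + C0) ^ 2 :=
        mul_le_mul_of_nonneg_right h16 (sq_nonneg _)
      exact mul_le_mul_of_nonneg_left h8 this
    refine h7.trans (le_of_eq ?_)
    have h9 : (2 ^ n : ℝ) = (2:ℝ) ^ ((n:ℝ)) := (Real.rpow_natCast 2 n).symm
    have h10 : ((2:ℝ) ^ (-(3/4) : ℝ)) ^ n = (2:ℝ) ^ ((-(3/4) : ℝ) * n) := by
      rw [← Real.rpow_natCast ((2:ℝ) ^ (-(3/4) : ℝ)) n, ← Real.rpow_mul (by norm_num)]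
    have h11 : ((2:ℝ) ^ ((n:ℝ)))⁻¹ * (2:ℝ) ^ ((n:ℝ)/4) = (2:ℝ) ^ ((-(3/4) : ℝ) * n) := by
      rw [← Real.rpow_neg (by norm_num : (0:ℝ) ≤ 2), ← Real.rpow_add (by norm_num : (0:ℝ) < 2)]
      congr 1
      ring
    rw [h9, h10, ← h11]
    ring
  have hqt : Tendsto (fun n : ℕ => (1 + C0) ^ 2 * ((2:ℝ) ^ (-(3/4) : ℝ)) ^ n) atTop (𝓝 0) := by
    have h11 := tendsto_pow_atTop_nhds_zero_of_lt_one hq0 hq1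
    simpa using h11.const_mul ((1 + C0) ^ 2)
  have hrt : Tendsto r atTop (𝓝 0) :=
    tendsto_of_tendsto_of_tendsto_of_le_of_le' tendsto_const_nhds hqt
      (Eventually.of_forall fun n => sq_nonneg _) hev
  exact tendsto_of_tendsto_of_tendsto_of_le_of_le' tendsto_const_nhds hrt
    (Eventually.of_forall hlb) (Eventually.of_forall hub)


end BMC
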